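/- Suppose the finite group G acts on the finite set Ω, (G, Ω) satisfies Hypothesis (3fix), and let α ∈ Ω. Then: (a) if some element of G_α of 2-power order fixes exactly three points of Ω, then G_α contains a Sylow 2-subgroup of G; (b) if some element of G_α of 3-power order fixes exactly three points of Ω, then 3 divides |Ω| and G_α does not contain any Sylow 3-subgroup of G; (c) for every prime p ≥ 5 dividing |G_α|, some Sylow p-subgroup of G is contained in G_α. -/

import Mathlib

/-- Hypothesis (3fix): the action of `G` on `Ω` is faithful and transitive, every element
of `G` fixing at least four distinct points of `Ω` is the identity, and some nontrivial
element of `G` fixes at least three distinct points of `Ω`. -/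
def Hyp3fix (G : Type*) [Group G] (Ω : Type*) [MulAction G Ω] : Prop :=
  MulAction.IsPretransitive G Ω ∧
  (∀ g : G, (∀ ω : Ω, g • ω = ω) → g = 1) ∧
  (∀ g : G, ∀ a b c d : Ω, a ≠ b → a ≠ c → a ≠ d → b ≠ c → b ≠ d → c ≠ d →
      g • a = a → g • b = b → g • c = c → g • d = d → g = 1) ∧
  (∃ g : G, g ≠ 1 ∧ ∃ a b c : Ω, a ≠ b ∧ a ≠ c ∧ b ≠ c ∧
      g • a = a ∧ g • b = b ∧ g • c = c)

private lemma fix_pow' {G : Type*} [Group G] {Ω : Type*} [MulAction G Ω] {g : G} {α : Ω}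
    (h : g • α = α) : ∀ t : ℕ, g ^ t • α = α := by
  intro t
  induction t with
  | zero => simp
  | succ t ih => rw [pow_succ, mul_smul, h, ih]

private lemma card_modEq_fix {p n : ℕ} [Fact p.Prime] {G : Type*} [Group G] {Ω : Type*}
    [Finite Ω] [MulAction G Ω] {x : G} (hx : orderOf x = p ^ n) :
    Nat.card Ω ≡ Nat.card {ω : Ω | x • ω = ω} [MOD p] := by
  have hZ : IsPGroup p (Subgroup.zpowers x) :=
    IsPGroup.of_card (by rw [Nat.card_zpowers, hx])
  have hs : MulAction.fixedPoints (Subgroup.zpowers x) Ω = {ω : Ω | x • ω = ω} := by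
    ext ω
    constructor
    · intro hω
      exact hω ⟨x, Subgroup.mem_zpowers x⟩
    · intro hω g
      have hst : (g : G) ∈ MulAction.stabilizer G ω :=
        Subgroup.zpowers_le.mpr (MulAction.mem_stabilizer_iff.mpr hω) g.2
      exact hst
  have hmod := hZ.card_modEq_card_fixedPoints Ω
  rwa [hs] at hmod

theorem hyp3fix_sylow_in_stabilizer (G : Type*) [Group G] [Finite G]
    (Ω : Type*) [Finite Ω] [MulAction G Ω] (h : Hyp3fix G Ω) (α : Ω) :
    ((∃ x ∈ MulAction.stabilizer G α, (∃ n : ℕ, orderOf x = 2 ^ n) ∧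
        Nat.card {ω : Ω | x • ω = ω} = 3) →
      ∃ S : Sylow 2 G, (S : Subgroup G) ≤ MulAction.stabilizer G α) ∧
    ((∃ x ∈ MulAction.stabilizer G α, (∃ n : ℕ, orderOf x = 3 ^ n) ∧
        Nat.card {ω : Ω | x • ω = ω} = 3) →
      3 ∣ Nat.card Ω ∧
        ∀ S : Sylow 3 G, ¬ ((S : Subgroup G) ≤ MulAction.stabilizer G α)) ∧
    (∀ p : ℕ, p.Prime → 5 ≤ p → p ∣ Nat.card (MulAction.stabilizer G α) →
      ∃ S : Sylow p G, (S : Subgroup G) ≤ MulAction.stabilizer G α) := by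
  obtain ⟨htrans, hfaith, h4, h3⟩ := h
  haveI := htrans
  refine ⟨?_, ?_, ?_⟩
  · -- part (a)
    rintro ⟨x, hx, ⟨n, hn⟩, hcard⟩
    haveI : Fact (Nat.Prime 2) := ⟨Nat.prime_two⟩
    have hmod : Nat.card Ω ≡ 3 [MOD 2] := by
      have := card_modEq_fix (p := 2) (Ω := Ω) hn
      rwa [hcard] at this
    obtain ⟨S⟩ := (inferInstance : Nonempty (Sylow 2 G))
    have hfixmod := S.2.card_modEq_card_fixedPoints Ω
    have hne : Nat.card (MulAction.fixedPoints S Ω) ≠ 0 := by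
      intro h0
      rw [Nat.ModEq, h0] at hfixmod
      rw [Nat.ModEq] at hmod
      omega
    have hnefp : Nonempty (MulAction.fixedPoints S Ω) := (Nat.card_ne_zero.mp hne).1
    obtain ⟨β, hβ⟩ := hnefp
    obtain ⟨g, hg⟩ := htrans.exists_smul_eq β α
    refine ⟨g • S, ?_⟩
    intro q hq
    have hs : g⁻¹ * q * g ∈ (S : Subgroup G) := by
      rw [Sylow.coe_subgroup_smul, Subgroup.mem_pointwise_smul_iff_inv_smul_mem] at hq
      simpa [MulAut.smul_def, mul_assoc] using hq
    have hsβ : (g⁻¹ * q * g) • β = β := hβ ⟨g⁻¹ * q * g, hs⟩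
    rw [MulAction.mem_stabilizer_iff]
    have hqg : q * g = g * (g⁻¹ * q * g) := by group
    calc q • α = q • (g • β) := by rw [hg]
      _ = (q * g) • β := by rw [mul_smul]
      _ = (g * (g⁻¹ * q * g)) • β := by rw [hqg]
      _ = g • ((g⁻¹ * q * g) • β) := by rw [mul_smul]
      _ = g • β := by rw [hsβ]
      _ = α := hg
  · -- part (b)
    rintro ⟨x, hx, ⟨n, hn⟩, hcard⟩
    haveI : Fact (Nat.Prime 3) := ⟨Nat.prime_three⟩
    have hmod : Nat.card Ω ≡ 3 [MOD 3] := by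
      have := card_modEq_fix (p := 3) (Ω := Ω) hn
      rwa [hcard] at this
    have h3Ω : 3 ∣ Nat.card Ω := by
      have := hmod
      rw [Nat.ModEq] at this
      omega
    refine ⟨h3Ω, fun S hS => ?_⟩
    have hcardS : Nat.card S = 3 ^ (Nat.card G).factorization 3 := S.card_eq_multiplicity
    have hdvd : Nat.card S ∣ Nat.card (MulAction.stabilizer G α) :=
      Subgroup.card_dvd_of_le hS
    have horb : Nat.card (MulAction.stabilizer G α) * Nat.card Ω = Nat.card G := by
      have hmi := Subgroup.card_mul_index (MulAction.stabilizer G α)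
      rwa [MulAction.index_stabilizer_of_transitive] at hmi
    have hpow : 3 ^ ((Nat.card G).factorization 3 + 1) ∣ Nat.card G := by
      rw [pow_succ, ← hcardS, ← horb]
      exact mul_dvd_mul hdvd h3Ω
    have hG0 : Nat.card G ≠ 0 := Nat.card_pos.ne'
    have hle := (Nat.Prime.pow_dvd_iff_le_factorization Nat.prime_three hG0).mp hpow
    omega
  · -- part (c)
    intro p hp hp5 hpd
    haveI := Fact.mk hp
    set H := MulAction.stabilizer G α with hHdef
    obtain ⟨Q⟩ := (inferInstance : Nonempty (Sylow p H))
    set Q' : Subgroup G := (Q : Subgroup H).map H.subtype with hQ'def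
    have hQ'H : Q' ≤ H := Subgroup.map_subtype_le _
    have hQ'p : IsPGroup p Q' := Q.2.map H.subtype
    have hcardQ' : Nat.card Q' = Nat.card Q :=
      (Nat.card_congr (Subgroup.equivMapOfInjective _ _ H.subtype_injective).toEquiv).symm
    have hH0 : Nat.card H ≠ 0 := Nat.card_pos.ne'
    have hQ'bot : Q' ≠ ⊥ := by
      rw [← Subgroup.one_lt_card_iff_ne_bot, hcardQ', Q.card_eq_multiplicity]
      exact Nat.one_lt_pow (hp.factorization_pos_of_dvd hH0 hpd).ne' hp.one_lt
    obtain hb | ⟨x, hxQ', hx1⟩ := Q'.bot_or_exists_ne_one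
    · exact absurd hb hQ'bot
    have key : ∀ g : G, g ∈ Subgroup.normalizer (Q' : Set G) → (∃ k, orderOf g = p ^ k) → g ∈ H := by
      rintro g hgN ⟨k, hk⟩
      rw [hHdef, MulAction.mem_stabilizer_iff]
      have hfixi : ∀ i : ℕ, ∀ q ∈ Q', q • (g ^ i • α) = g ^ i • α := by
        intro i q hq
        have hgi : g ^ i ∈ Subgroup.normalizer (Q' : Set G) := pow_mem hgN i
        have h1 : (g ^ i)⁻¹ * q * g ^ i ∈ Q' := by
          have hmem := (Subgroup.mem_normalizer_iff.mp (inv_mem hgi)) q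
          simpa using hmem.mp hq
        have h2 : ((g ^ i)⁻¹ * q * g ^ i) • α = α :=
          MulAction.mem_stabilizer_iff.mp (hQ'H h1)
        have hqg : q * g ^ i = g ^ i * ((g ^ i)⁻¹ * q * g ^ i) := by group
        calc q • (g ^ i • α) = (q * g ^ i) • α := by rw [mul_smul]
          _ = (g ^ i * ((g ^ i)⁻¹ * q * g ^ i)) • α := by rw [hqg]
          _ = g ^ i • (((g ^ i)⁻¹ * q * g ^ i) • α) := by rw [mul_smul]
          _ = g ^ i • α := by rw [h2]
      have hm : ∃ m, 1 ≤ m ∧ m ≤ 3 ∧ g ^ m • α = α := by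
        by_contra hcon
        push_neg at hcon
        have hne : ∀ i j : ℕ, i < j → j ≤ 3 → g ^ i • α ≠ g ^ j • α := by
          intro i j hij hj3 he
          have hsplit : g ^ j = g ^ i * g ^ (j - i) := by
            rw [← pow_add, Nat.add_sub_cancel' hij.le]
          rw [hsplit, mul_smul] at he
          have h' : g ^ (j - i) • α = α := smul_left_cancel _ he.symm
          exact hcon (j - i) (by omega) (by omega) h'
        have hxfix : ∀ i : ℕ, x • (g ^ i • α) = g ^ i • α := fun i => hfixi i x hxQ'
        have hx0 : x • α = α := by simpa using hxfix 0
        refine hx1 (h4 x α (g • α) (g ^ 2 • α) (g ^ 3 • α)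
          (by simpa using hne 0 1 (by omega) (by omega))
          (by simpa using hne 0 2 (by omega) (by omega))
          (by simpa using hne 0 3 (by omega) (by omega))
          (by simpa using hne 1 2 (by omega) (by omega))
          (by simpa using hne 1 3 (by omega) (by omega))
          (hne 2 3 (by omega) (by omega))
          hx0 (by simpa using hxfix 1) (hxfix 2) (hxfix 3))
      obtain ⟨m, hm1, hm3, hgm⟩ := hm
      by_cases hg1 : g = 1
      · simp [hg1]
      have hog : 1 < orderOf g := by
        have hpos : 0 < orderOf g := orderOf_pos g
        have hne1 : orderOf g ≠ 1 := fun he => hg1 (orderOf_eq_one_iff.mp he)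
        omega
      have hcop : Nat.Coprime m (orderOf g) := by
        rw [hk]
        refine Nat.Coprime.pow_right k ?_
        have hnd : ¬ p ∣ m := fun hd => by
          have := Nat.le_of_dvd (by omega) hd
          omega
        exact ((Nat.Prime.coprime_iff_not_dvd hp).mpr hnd).symm
      obtain ⟨t, -, ht⟩ := Nat.exists_mul_mod_eq_one_of_coprime hcop hog
      have hgmt : g ^ (m * t) = g := by
        rw [← pow_mod_orderOf, ht, pow_one]
      calc g • α = g ^ (m * t) • α := by rw [hgmt]
        _ = (g ^ m) ^ t • α := by rw [pow_mul]
        _ = α := fix_pow' hgm t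
    obtain ⟨S, hQ'S⟩ := hQ'p.exists_le_sylow
    refine ⟨S, ?_⟩
    by_cases heq : Q' = (S : Subgroup G)
    · rw [← heq]
      exact hQ'H
    exfalso
    haveI hnilp : Group.IsNilpotent (S : Subgroup G) := S.2.isNilpotent
    have hnc := normalizerCondition_of_isNilpotent (G := (S : Subgroup G))
    set K : Subgroup (S : Subgroup G) := Q'.subgroupOf (S : Subgroup G) with hKdef
    have hKtop : K ≠ ⊤ := by
      intro htop
      exact heq (le_antisymm hQ'S (Subgroup.subgroupOf_eq_top.mp htop))
    obtain ⟨g, hgN, hgK⟩ := SetLike.exists_of_lt (hnc K (lt_top_iff_ne_top.mpr hKtop))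
    have hgN' : (g : G) ∈ Subgroup.normalizer (Q' : Set G) := by
      rw [Subgroup.mem_normalizer_iff]
      intro q
      constructor
      · intro hq
        have hqS : q ∈ (S : Subgroup G) := hQ'S hq
        have hqK : (⟨q, hqS⟩ : (S : Subgroup G)) ∈ K := by
          simpa [hKdef, Subgroup.mem_subgroupOf] using hq
        have hgq := (Subgroup.mem_normalizer_iff.mp hgN ⟨q, hqS⟩).mp hqK
        simpa [hKdef, Subgroup.mem_subgroupOf] using hgq
      · intro hq
        have hq2S : (g : G) * q * (g : G)⁻¹ ∈ (S : Subgroup G) := hQ'S hq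
        have hqS : q ∈ (S : Subgroup G) := by
          have hmm := mul_mem (mul_mem (inv_mem g.2) hq2S) g.2
          have hqe : (g : G)⁻¹ * ((g : G) * q * (g : G)⁻¹) * (g : G) = q := by group
          rwa [hqe] at hmm
        refine (Subgroup.mem_normalizer_iff.mp hgN ⟨q, hqS⟩).mpr ?_
        simpa [hKdef, Subgroup.mem_subgroupOf] using hq
    have hordg : ∃ k, orderOf (g : G) = p ^ k := by
      obtain ⟨k, hk⟩ := S.2 g
      have hgp : (g : G) ^ (p ^ k) = 1 := by
        have := congrArg (Subgroup.subtype (S : Subgroup G)) hk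
        simpa using this
      obtain ⟨j, _, hj2⟩ := (Nat.dvd_prime_pow hp).mp (orderOf_dvd_of_pow_eq_one hgp)
      exact ⟨j, hj2⟩
    have hgH : (g : G) ∈ H := key (g : G) hgN' hordg
    set R : Subgroup G := Subgroup.zpowers (g : G) ⊔ Q' with hRdef
    have hRS : R ≤ (S : Subgroup G) := sup_le (Subgroup.zpowers_le.mpr g.2) hQ'S
    have hRH : R ≤ H := sup_le (Subgroup.zpowers_le.mpr hgH) hQ'H
    have hRp : IsPGroup p R := S.2.to_le hRS
    have hRHp : IsPGroup p (R.subgroupOf H) :=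
      hRp.of_equiv (Subgroup.subgroupOfEquivOfLe hRH).symm
    have hQle : (Q : Subgroup H) ≤ R.subgroupOf H :=
      Subgroup.map_le_iff_le_comap.mp (le_sup_right.trans_eq' hQ'def.symm)
    have hReq : R.subgroupOf H = (Q : Subgroup H) := Q.3 hRHp hQle
    have hgR : (g : G) ∈ R := Subgroup.mem_sup_left (Subgroup.mem_zpowers (g : G))
    have hgRH : (⟨(g : G), hgH⟩ : H) ∈ R.subgroupOf H := by
      simpa [Subgroup.mem_subgroupOf] using hgR
    rw [hReq] at hgRH
    have hgQ' : (g : G) ∈ Q' := ⟨⟨(g : G), hgH⟩, hgRH, rfl⟩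
    exact hgK (by simpa [hKdef, Subgroup.mem_subgroupOf] using hgQ')
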